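/- arXiv:1708.04065 — 2 statements merged into one kernel-verified Lean document; each statement's English description precedes it below -/
import Mathlib

section
/- Let Ā = (ℤ/2)⟨X,Y⟩. Then for every c ∈ Ā, the element X²Y² − c² does not lie in the additive subgroup [Ā,Ā] + F⁵Ā. -/
/-- Words in the two letters `X, Y`. -/
abbrev FW := FreeMonoid (Fin 2)

/-- `Ā = (ℤ/2)⟨X,Y⟩`, the free associative unital algebra over `ℤ/2` on two
non-commuting variables, realized as a monoid algebra of the free monoid. -/
abbrev Abar := MonoidAlgebra (ZMod 2) FW

/-- The variable `X`. -/
noncomputable def Xv : Abar := MonoidAlgebra.of (ZMod 2) FW (FreeMonoid.of 0)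

/-- The variable `Y`. -/
noncomputable def Yv : Abar := MonoidAlgebra.of (ZMod 2) FW (FreeMonoid.of 1)

/-- The set of commutators of `Ā`, generating `[Ā,Ā]`. -/
def commA : Set Abar := {x | ∃ a b : Abar, x = a * b - b * a}

/-- The words of length `≥ n`; they generate `FⁿĀ = ⊕_{i≥n} Ā_i` as an additive group. -/
def FdegSet (n : ℕ) : Set Abar :=
  {x | ∃ w : FW, n ≤ w.length ∧ x = MonoidAlgebra.of (ZMod 2) FW w}

namespace Stmt5Aux

def Lw : List (Fin 2) := [0,0,1,1]

def chi (w : FW) : ZMod 2 := if FreeMonoid.toList w ~r Lw then 1 else 0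

lemma chi_mul_comm (u v : FW) : chi (u * v) = chi (v * u) := by
  unfold chi
  refine if_congr ?_ rfl rfl
  simp only [FreeMonoid.toList_mul]
  exact ⟨fun h => (List.isRotated_append).trans h, fun h => (List.isRotated_append).trans h⟩

lemma not_rot_sq (l : List (Fin 2)) : ¬ (l ++ l ~r Lw) := by
  intro h
  have hlen := h.perm.length_eq
  simp [Lw, List.length_append] at hlen
  have h2 : l.length = 2 := by omega
  match l, h2 with
  | [a,b], _ => fin_cases a <;> fin_cases b <;> exact absurd h (by decide)

lemma chi_sq (u : FW) : chi (u * u) = 0 := by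
  unfold chi
  rw [if_neg]
  simp only [FreeMonoid.toList_mul]
  exact not_rot_sq _

lemma chi_len {w : FW} (hw : w.length ≠ 4) : chi w = 0 := by
  unfold chi
  rw [if_neg]
  intro h
  exact hw (by simpa [Lw, FreeMonoid.length] using h.perm.length_eq)

noncomputable def phi : Abar →+ ZMod 2 :=
  (Finsupp.liftAddHom fun w => AddMonoidHom.mulRight (chi w)).comp
    MonoidAlgebra.coeffAddEquiv.toAddMonoidHom

lemma phi_single (w : FW) (r : ZMod 2) : phi (MonoidAlgebra.single w r) = r * chi w :=
  Finsupp.liftAddHom_apply_single (fun w => AddMonoidHom.mulRight (chi w)) w r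

lemma phi_mul (a b : Abar) :
    phi (a * b) = a.coeff.sum fun u cu => b.coeff.sum fun v cv => (cu * cv) * chi (u * v) := by
  rw [MonoidAlgebra.mul_def, map_finsuppSum]
  refine Finsupp.sum_congr fun u _ => ?_
  rw [map_finsuppSum]
  exact Finsupp.sum_congr fun v _ => phi_single _ _

lemma phi_comm (a b : Abar) : phi (a * b - b * a) = 0 := by
  rw [map_sub, phi_mul, phi_mul, Finsupp.sum_comm b.coeff a.coeff]
  rw [sub_eq_zero]
  refine Finsupp.sum_congr fun u _ => Finsupp.sum_congr fun v _ => ?_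
  rw [chi_mul_comm u v]; ring

lemma phi_sq (c : Abar) : phi (c * c) = 0 := by
  rw [phi_mul]
  rw [Finsupp.sum]
  have : ∀ u : FW, (Finsupp.sum c.coeff fun v cv => (c.coeff u * cv) * chi (u * v))
      = ∑ v ∈ c.coeff.support, (c.coeff u * c.coeff v) * chi (u * v) := fun u => rfl
  simp only [this]
  rw [← Finset.sum_product']
  refine Finset.sum_involution (fun p _ => (p.2, p.1)) ?_ ?_ ?_ ?_
  · rintro ⟨u, v⟩ _
    simp only
    rw [chi_mul_comm v u, mul_comm (c.coeff v) (c.coeff u)]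
    exact CharTwo.add_self_eq_zero _
  · rintro ⟨u, v⟩ _ hne heq
    have huv : v = u := (Prod.mk.injEq _ _ _ _).mp heq |>.1
    subst huv
    exact hne (by rw [chi_sq]; ring)
  · rintro ⟨u, v⟩ h
    simp only [Finset.mem_product] at h ⊢
    exact ⟨h.2, h.1⟩
  · rintro ⟨u, v⟩ _
    rfl

end Stmt5Aux

open Stmt5Aux in
/-- for every `c ∈ (ℤ/2)⟨X,Y⟩`, `X²Y² − c²` does not lie in `[Ā,Ā] + F⁵Ā`. -/
theorem stmt5 (c : Abar) :
    Xv ^ 2 * Yv ^ 2 - c ^ 2 ∉ AddSubgroup.closure (commA ∪ FdegSet 5) := by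
  intro hmem
  have hsub : commA ∪ FdegSet 5 ⊆ (phi.ker : AddSubgroup Abar) := by
    rintro x (⟨a, b, rfl⟩ | ⟨w, hw, rfl⟩)
    · exact phi_comm a b
    · show phi _ = 0
      rw [MonoidAlgebra.of_apply, phi_single, chi_len (by omega), mul_zero]
  have h0 : phi (Xv ^ 2 * Yv ^ 2 - c ^ 2) = 0 :=
    (AddSubgroup.closure_le _).mpr hsub hmem
  rw [map_sub, sq c, phi_sq] at h0
  have hx : Xv ^ 2 * Yv ^ 2 =
      MonoidAlgebra.single (FreeMonoid.of 0 * FreeMonoid.of 0 * (FreeMonoid.of 1 * FreeMonoid.of 1)) 1 := by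
    simp [Xv, Yv, sq, MonoidAlgebra.of_apply, MonoidAlgebra.single_mul_single]
  rw [hx, phi_single] at h0
  have : chi (FreeMonoid.of 0 * FreeMonoid.of 0 * (FreeMonoid.of 1 * FreeMonoid.of 1)) = 1 := by decide
  rw [this] at h0
  simp at h0
end

section
/- Let Ā = (ℤ/2)⟨X,Y⟩. Then the element X²Y² − XYXY does not lie in [Ā,Ā]. -/
instance : DecidableEq FW :=
  fun a b => decidable_of_iff (FreeMonoid.toList a = FreeMonoid.toList b)
    FreeMonoid.toList.injective.eq_iff

/-- The word `XYXY`. -/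
def w1 : FW := FreeMonoid.ofList [0, 1, 0, 1]

/-- The word `YXYX`. -/
def w2 : FW := FreeMonoid.ofList [1, 0, 1, 0]

lemma w1_ne_w2 : w1 ≠ w2 := by decide

/-- The functional: sum of coefficients of `XYXY` and `YXYX`. -/
noncomputable def phi : Abar →+ ZMod 2 :=
  AddMonoidHom.comp (Finsupp.applyAddHom w1 + Finsupp.applyAddHom w2 : (FW →₀ ZMod 2) →+ ZMod 2)
    (MonoidAlgebra.coeffAddEquiv : Abar ≃+ (FW →₀ ZMod 2)).toAddMonoidHom

lemma rot_mem (w : List (Fin 2)) (h : ([0,1,0,1] : List (Fin 2)) ~r w) :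
    w = [0,1,0,1] ∨ w = [1,0,1,0] := by
  rw [List.isRotated_iff_mod] at h
  obtain ⟨n, hn, rfl⟩ := h
  have hn4 : n ≤ 4 := by simpa using hn
  interval_cases n <;> simp [List.rotate]

lemma key (u v : FW) :
    ((u * v = w1 ∨ u * v = w2) ↔ (v * u = w1 ∨ v * u = w2)) := by
  have main : ∀ a b : List (Fin 2),
      (a ++ b = [0,1,0,1] ∨ a ++ b = [1,0,1,0]) →
      (b ++ a = [0,1,0,1] ∨ b ++ a = [1,0,1,0]) := by
    intro a b h
    apply rot_mem
    have h1 : (a ++ b) ~r (b ++ a) := List.isRotated_append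
    rcases h with h | h
    · rw [← h]; exact h1
    · have h2 : ([0,1,0,1] : List (Fin 2)) ~r [1,0,1,0] := by
        rw [List.isRotated_iff_mod]; exact ⟨1, by norm_num, by decide⟩
      exact h2.trans (h ▸ h1)
  have e1 : ∀ (x y w : FW) (L : List (Fin 2)), FreeMonoid.toList w = L →
      (x * y = w ↔ FreeMonoid.toList x ++ FreeMonoid.toList y = L) := by
    intro x y w L hw
    rw [← hw, ← FreeMonoid.toList_mul, FreeMonoid.toList.injective.eq_iff]
  rw [e1 u v w1 _ rfl, e1 u v w2 _ rfl, e1 v u w1 _ rfl, e1 v u w2 _ rfl]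
  exact ⟨main _ _, main _ _⟩

lemma phi_single (u : FW) (r : ZMod 2) :
    phi (MonoidAlgebra.single u r) = (if u = w1 then r else 0) + (if u = w2 then r else 0) := by
  show (MonoidAlgebra.single u r).coeff w1 + (MonoidAlgebra.single u r).coeff w2 = _
  simp [MonoidAlgebra.coeff_single, Finsupp.single_apply]

lemma phi_comm (a b : Abar) : phi (a * b) = phi (b * a) := by
  induction a using MonoidAlgebra.induction_linear with
  | zero => simp
  | add f g hf hg => rw [add_mul, mul_add, map_add, map_add, hf, hg]
  | single u r =>
    induction b using MonoidAlgebra.induction_linear with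
    | zero => simp
    | add f g hf hg => rw [add_mul, mul_add, map_add, map_add, hf, hg]
    | single v s =>
      have h1 : (MonoidAlgebra.single u r : Abar) * MonoidAlgebra.single v s
          = MonoidAlgebra.single (u * v) (r * s) := MonoidAlgebra.single_mul_single ..
      have h2 : (MonoidAlgebra.single v s : Abar) * MonoidAlgebra.single u r
          = MonoidAlgebra.single (v * u) (s * r) := MonoidAlgebra.single_mul_single ..
      rw [h1, h2, phi_single, phi_single, mul_comm s r]
      have hk := key u v
      have h12 := w1_ne_w2
      by_cases huv : u * v = w1 <;> by_cases huv2 : u * v = w2 <;>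
        by_cases hvu : v * u = w1 <;> by_cases hvu2 : v * u = w2 <;>
        simp_all

lemma phi_comm_mem : ∀ x ∈ AddSubgroup.closure commA, phi x = 0 := by
  intro x hx
  have : AddSubgroup.closure commA ≤ phi.ker := by
    rw [AddSubgroup.closure_le]
    rintro y ⟨a, b, rfl⟩
    simp [AddMonoidHom.mem_ker, phi_comm a b]
  exact this hx

/-- `X²Y² − XYXY ∉ [Ā,Ā]`. -/
theorem stmt7 :
    Xv ^ 2 * Yv ^ 2 - Xv * Yv * Xv * Yv ∉ AddSubgroup.closure commA := by
  intro h
  have hval : phi (Xv ^ 2 * Yv ^ 2 - Xv * Yv * Xv * Yv) = 1 := by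
    have hx : Xv ^ 2 * Yv ^ 2 = MonoidAlgebra.single (FreeMonoid.ofList [0,0,1,1]) (1 : ZMod 2) := by
      simp only [Xv, Yv, MonoidAlgebra.of_apply, pow_two]
      simp only [MonoidAlgebra.single_mul_single, mul_one]
      rfl
    have hy : Xv * Yv * Xv * Yv = MonoidAlgebra.single w1 (1 : ZMod 2) := by
      simp only [Xv, Yv, MonoidAlgebra.of_apply]
      simp only [MonoidAlgebra.single_mul_single, mul_one]
      rfl
    have h1 : FreeMonoid.ofList [0,0,1,1] ≠ w1 := by decide
    have h2 : FreeMonoid.ofList [0,0,1,1] ≠ w2 := by decide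
    rw [hx, hy, map_sub, phi_single, phi_single]
    rw [if_neg h1, if_neg h2, if_pos rfl, if_neg w1_ne_w2]
    decide
  rw [phi_comm_mem _ h] at hval
  exact one_ne_zero hval.symm
end
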